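/- arXiv:2412.19436 — 3 statements merged into one kernel-verified Lean document; each statement's English description precedes it below -/
import Mathlib

section
/- Let d_x, d_φ, r be positive integers with r ≤ min(d_x, d_φ), let Θ ∈ ℝ^{d_x×d_φ}, x ∈ ℝ^{d_x}, φ ∈ ℝ^{d_φ}, and let Û ∈ ℝ^{d_x×d_x}, V̂ ∈ ℝ^{d_φ×d_φ} be orthogonal matrices. Set Z = x φᵀ, Z_r = Ûᵀ Z V̂, Θ_r = Ûᵀ Θ V̂, and let z_rtv and θ_rtv be the rotation-truncation-vectorizations of Z and Θ. Then the approximation error of the reduced-space reward satisfies |xᵀ Θ φ − ⟨z_rtv, θ_rtv⟩| ≤ ‖x‖₂ · ‖φ‖₂ · ‖(Θ_r)_{22}‖_F. -/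
open Matrix

/-- The rotation-truncation-vectorization of a matrix indexed by the split index
types `Fin r ⊕ Fin a` and `Fin r ⊕ Fin b`: it keeps the (1,1), (1,2) and (2,1)
blocks (vectorized) and discards the (2,2) block. -/
def rtv {r a b : ℕ} (M : Matrix (Fin r ⊕ Fin a) (Fin r ⊕ Fin b) ℝ) :
    (Fin r × Fin r) ⊕ (Fin r × Fin b) ⊕ (Fin a × Fin r) → ℝ :=
  fun idx =>
    match idx with
    | Sum.inl (i, j) => M (Sum.inl i) (Sum.inl j)
    | Sum.inr (Sum.inl (i, j)) => M (Sum.inl i) (Sum.inr j)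
    | Sum.inr (Sum.inr (i, j)) => M (Sum.inr i) (Sum.inl j)


lemma trace_transpose_mul_eq {m n : Type*} [Fintype m] [Fintype n]
    (A B : Matrix m n ℝ) :
    Matrix.trace (Aᵀ * B) = ∑ i, ∑ j, A i j * B i j := by
  simp [Matrix.trace, Matrix.mul_apply, Matrix.diag]
  exact Finset.sum_comm

lemma rot_trace {m n p q : Type*} [Fintype m] [Fintype n] [Fintype p] [Fintype q]
    [DecidableEq m] [DecidableEq n]
    (U : Matrix m p ℝ) (V : Matrix n q ℝ)
    (hU : U * Uᵀ = 1) (hV : V * Vᵀ = 1)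
    (A B : Matrix m n ℝ) :
    Matrix.trace ((Uᵀ * A * V)ᵀ * (Uᵀ * B * V)) = Matrix.trace (Aᵀ * B) := by
  have h1 : (Uᵀ * A * V)ᵀ * (Uᵀ * B * V) = Vᵀ * (Aᵀ * B) * V := by
    simp only [Matrix.transpose_mul, Matrix.transpose_transpose]
    calc Vᵀ * (Aᵀ * U) * (Uᵀ * B * V)
        = Vᵀ * (Aᵀ * ((U * Uᵀ) * (B * V))) := by simp only [Matrix.mul_assoc]
      _ = Vᵀ * (Aᵀ * B) * V := by rw [hU]; simp only [Matrix.one_mul, Matrix.mul_assoc]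
  rw [h1, Matrix.trace_mul_cycle, ← Matrix.mul_assoc, hV, Matrix.one_mul]

/-- **Approximation error of the reduced-space reward.**
With `Z = xφᵀ`, `Z_r = Ûᵀ Z V̂`, `Θ_r = Ûᵀ Θ V̂` for orthogonal `Û`, `V̂`, the
reduced-space reward satisfies
`|xᵀΘφ − ⟨z_rtv, θ_rtv⟩| ≤ ‖x‖₂ ‖φ‖₂ ‖(Θ_r)₂₂‖_F`. -/
theorem reward_rtv_error_bound (dx dφ r : ℕ)
    (hdx : 0 < dx) (hdφ : 0 < dφ) (hr : 0 < r) (hrx : r ≤ dx) (hrφ : r ≤ dφ)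
    (Θ : Matrix (Fin dx) (Fin dφ) ℝ) (x : Fin dx → ℝ) (φ : Fin dφ → ℝ)
    (Uh : Matrix (Fin dx) (Fin r ⊕ Fin (dx - r)) ℝ)
    (Vh : Matrix (Fin dφ) (Fin r ⊕ Fin (dφ - r)) ℝ)
    (hUo : Uhᵀ * Uh = 1) (hUo' : Uh * Uhᵀ = 1)
    (hVo : Vhᵀ * Vh = 1) (hVo' : Vh * Vhᵀ = 1)
    (Z : Matrix (Fin dx) (Fin dφ) ℝ) (hZ : Z = vecMulVec x φ)
    (Zr : Matrix (Fin r ⊕ Fin (dx - r)) (Fin r ⊕ Fin (dφ - r)) ℝ)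
    (hZr : Zr = Uhᵀ * Z * Vh)
    (Θr : Matrix (Fin r ⊕ Fin (dx - r)) (Fin r ⊕ Fin (dφ - r)) ℝ)
    (hΘr : Θr = Uhᵀ * Θ * Vh) :
    |x ⬝ᵥ (Θ *ᵥ φ) - rtv Zr ⬝ᵥ rtv Θr| ≤
      Real.sqrt (x ⬝ᵥ x) * Real.sqrt (φ ⬝ᵥ φ) *
        Real.sqrt (∑ i, ∑ j, (Θr.toBlocks₂₂ i j) ^ 2) := by
  -- Step 1: the full reward equals the Frobenius inner product of Z and Θ
  have hA : x ⬝ᵥ (Θ *ᵥ φ) = ∑ i, ∑ j, Z i j * Θ i j := by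
    subst hZ
    simp only [dotProduct, mulVec, vecMulVec_apply, Finset.mul_sum]
    refine Finset.sum_congr rfl fun i _ => Finset.sum_congr rfl fun j _ => by ring
  -- Step 2: rotation invariance
  have hB : ∑ p, ∑ q, Zr p q * Θr p q = ∑ i, ∑ j, Z i j * Θ i j := by
    rw [← trace_transpose_mul_eq, ← trace_transpose_mul_eq, hZr, hΘr]
    exact rot_trace Uh Vh hUo' hVo' Z Θ
  -- Step 3: splitting the rotated inner product
  have hC : ∑ p, ∑ q, Zr p q * Θr p q =
      rtv Zr ⬝ᵥ rtv Θr +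
        ∑ p : Fin (dx - r) × Fin (dφ - r),
          Zr (Sum.inr p.1) (Sum.inr p.2) * Θr (Sum.inr p.1) (Sum.inr p.2) := by
    simp only [dotProduct, rtv, Fintype.sum_sum_type, Fintype.sum_prod_type,
      Finset.sum_add_distrib]
    ring
  have hdiff : x ⬝ᵥ (Θ *ᵥ φ) - rtv Zr ⬝ᵥ rtv Θr =
      ∑ p : Fin (dx - r) × Fin (dφ - r),
        Zr (Sum.inr p.1) (Sum.inr p.2) * Θr (Sum.inr p.1) (Sum.inr p.2) := by
    rw [hA, ← hB, hC]; ring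
  set f : Fin (dx - r) × Fin (dφ - r) → ℝ := fun p => Zr (Sum.inr p.1) (Sum.inr p.2)
  set g : Fin (dx - r) × Fin (dφ - r) → ℝ := fun p => Θr (Sum.inr p.1) (Sum.inr p.2)
  -- Cauchy-Schwarz on the (2,2) block
  have hCS : |∑ p, f p * g p| ≤
      Real.sqrt (∑ p, f p ^ 2) * Real.sqrt (∑ p, g p ^ 2) := by
    have h := Finset.sum_mul_sq_le_sq_mul_sq Finset.univ f g
    have := Real.sqrt_le_sqrt h
    rwa [Real.sqrt_sq_eq_abs, Real.sqrt_mul (by positivity)] at this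
  -- Frobenius norm of Zr equals that of Z
  have hZfro : ∑ p, ∑ q, Zr p q ^ 2 = (x ⬝ᵥ x) * (φ ⬝ᵥ φ) := by
    have h1 : ∑ p, ∑ q, Zr p q ^ 2 = ∑ i, ∑ j, Z i j ^ 2 := by
      have := rot_trace Uh Vh hUo' hVo' Z Z
      rw [← hZr] at this
      rw [trace_transpose_mul_eq, trace_transpose_mul_eq] at this
      simpa [sq] using this
    rw [h1, hZ, dotProduct, dotProduct, Finset.sum_mul_sum]
    refine Finset.sum_congr rfl fun i _ => Finset.sum_congr rfl fun j _ => by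
      simp [vecMulVec_apply]; ring
  -- the (2,2) block has smaller Frobenius norm
  have hle : ∑ p, f p ^ 2 ≤ (x ⬝ᵥ x) * (φ ⬝ᵥ φ) := by
    rw [← hZfro]
    have hsplit : ∑ p, ∑ q, Zr p q ^ 2 =
        ((∑ p : Fin r × Fin r, Zr (Sum.inl p.1) (Sum.inl p.2) ^ 2)
          + (∑ p : Fin r × Fin (dφ - r), Zr (Sum.inl p.1) (Sum.inr p.2) ^ 2)
          + (∑ p : Fin (dx - r) × Fin r, Zr (Sum.inr p.1) (Sum.inl p.2) ^ 2))
          + ∑ p, f p ^ 2 := by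
      simp only [f, Fintype.sum_sum_type, Fintype.sum_prod_type,
        Finset.sum_add_distrib]
      ring
    rw [hsplit]
    have : (0:ℝ) ≤ (∑ p : Fin r × Fin r, Zr (Sum.inl p.1) (Sum.inl p.2) ^ 2)
          + (∑ p : Fin r × Fin (dφ - r), Zr (Sum.inl p.1) (Sum.inr p.2) ^ 2)
          + (∑ p : Fin (dx - r) × Fin r, Zr (Sum.inr p.1) (Sum.inl p.2) ^ 2) := by
      positivity
    linarith
  have hgsum : ∑ p, g p ^ 2 = ∑ i, ∑ j, (Θr.toBlocks₂₂ i j) ^ 2 := by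
    simp [g, Fintype.sum_prod_type, Matrix.toBlocks₂₂]
  calc |x ⬝ᵥ (Θ *ᵥ φ) - rtv Zr ⬝ᵥ rtv Θr| = |∑ p, f p * g p| := by rw [hdiff]
    _ ≤ Real.sqrt (∑ p, f p ^ 2) * Real.sqrt (∑ p, g p ^ 2) := hCS
    _ ≤ Real.sqrt ((x ⬝ᵥ x) * (φ ⬝ᵥ φ)) * Real.sqrt (∑ p, g p ^ 2) := by
        exact mul_le_mul_of_nonneg_right (Real.sqrt_le_sqrt hle) (Real.sqrt_nonneg _)
    _ = Real.sqrt (x ⬝ᵥ x) * Real.sqrt (φ ⬝ᵥ φ) *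
        Real.sqrt (∑ i, ∑ j, (Θr.toBlocks₂₂ i j) ^ 2) := by
        have hxx : (0:ℝ) ≤ x ⬝ᵥ x := Finset.sum_nonneg fun i _ => mul_self_nonneg (x i)
        rw [Real.sqrt_mul hxx, hgsum]
end

section
/- There exists an absolute constant C₂ > 0 with the following property. Let d_x, d_φ, r be positive integers with r ≤ min(d_x, d_φ). Let Θ* ∈ ℝ^{d_x×d_φ} have rank r with nonzero singular values σ_1 ≥ σ_2 ≥ … ≥ σ_r > 0. Let Θ̂ ∈ ℝ^{d_x×d_φ} have singular value decomposition Θ̂ = Û D̂ V̂ᵀ, where Û ∈ ℝ^{d_x×d_x} and V̂ ∈ ℝ^{d_φ×d_φ} are orthogonal and D̂ ∈ ℝ^{d_x×d_φ} is zero off the diagonal with nonincreasing nonnegative diagonal entries. Suppose ‖Θ̂ − Θ*‖_F ≤ B for some B with 0 < B ≤ σ_r/2. Then the (2,2) block of the rotation of Θ* with respect to the estimated subspaces satisfies ‖(Θ*_r)_{22}‖_F ≤ C₂ · (σ_1 / σ_r²) · B², where Θ*_r = Ûᵀ Θ* V̂ and (Θ*_r)_{22} ∈ ℝ^{(d_x−r)×(d_φ−r)}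 is its lower-right block. -/
open Finset Matrix

section Helpers

-- Minkowski inequality for finite sums
lemma minkowski_sum {ι : Type*} (s : Finset ι) (f g : ι → ℝ) :
    Real.sqrt (∑ i ∈ s, (f i + g i) ^ 2) ≤
      Real.sqrt (∑ i ∈ s, f i ^ 2) + Real.sqrt (∑ i ∈ s, g i ^ 2) := by
  have hf : (0:ℝ) ≤ ∑ i ∈ s, f i ^ 2 := Finset.sum_nonneg fun i _ => sq_nonneg _
  have hg : (0:ℝ) ≤ ∑ i ∈ s, g i ^ 2 := Finset.sum_nonneg fun i _ => sq_nonneg _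
  have hcs : (∑ i ∈ s, f i * g i) ≤ Real.sqrt (∑ i ∈ s, f i ^ 2) * Real.sqrt (∑ i ∈ s, g i ^ 2) := by
    have h1 := Finset.sum_mul_sq_le_sq_mul_sq s f g
    have h2 : (∑ i ∈ s, f i * g i) ≤ |∑ i ∈ s, f i * g i| := le_abs_self _
    have h3 : |∑ i ∈ s, f i * g i| = Real.sqrt ((∑ i ∈ s, f i * g i) ^ 2) := (Real.sqrt_sq_eq_abs _).symm
    rw [h3] at h2
    refine h2.trans ?_
    rw [← Real.sqrt_mul hf]
    exact Real.sqrt_le_sqrt h1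
  have key : (∑ i ∈ s, (f i + g i) ^ 2) ≤
      (Real.sqrt (∑ i ∈ s, f i ^ 2) + Real.sqrt (∑ i ∈ s, g i ^ 2)) ^ 2 := by
    have e : ∑ i ∈ s, (f i + g i) ^ 2
        = (∑ i ∈ s, f i ^ 2) + 2 * (∑ i ∈ s, f i * g i) + ∑ i ∈ s, g i ^ 2 := by
      rw [Finset.mul_sum, ← Finset.sum_add_distrib, ← Finset.sum_add_distrib]
      apply Finset.sum_congr rfl; intro i _; ring
    rw [e]
    have hf' := Real.sq_sqrt hf
    have hg' := Real.sq_sqrt hg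
    nlinarith [hcs]
  have := Real.sqrt_le_sqrt key
  rwa [Real.sqrt_sq (by positivity)] at this

-- Minkowski for double sums
lemma minkowski_sum2 {ι κ : Type*} [Fintype ι] [Fintype κ] (f g : ι → κ → ℝ) :
    Real.sqrt (∑ i, ∑ k, (f i k + g i k) ^ 2) ≤
      Real.sqrt (∑ i, ∑ k, f i k ^ 2) + Real.sqrt (∑ i, ∑ k, g i k ^ 2) := by
  have h := minkowski_sum (univ : Finset (ι × κ)) (fun p => f p.1 p.2) (fun p => g p.1 p.2)
  have e1 : ∀ (h : ι → κ → ℝ), ∑ i, ∑ k, h i k = ∑ p : ι × κ, h p.1 p.2 :=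
    fun h => (Fintype.sum_prod_type (fun p : ι × κ => h p.1 p.2)).symm
  rw [e1, e1, e1]
  exact h

-- row sum identity: if W * Wᵀ = 1 then ∑ k (∑ j v j * W j k)² = ∑ v²
lemma rowsum_sq {n m : ℕ} (W : Matrix (Fin n) (Fin m) ℝ) (hW : W * Wᵀ = 1) (v : Fin n → ℝ) :
    ∑ k : Fin m, (∑ j : Fin n, v j * W j k) ^ 2 = ∑ j : Fin n, v j ^ 2 := by
  have expand : ∀ k : Fin m, (∑ j : Fin n, v j * W j k) ^ 2
      = ∑ j : Fin n, ∑ j' : Fin n, (v j * v j') * (W j k * W j' k) := by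
    intro k
    rw [sq, Finset.sum_mul_sum]
    apply Finset.sum_congr rfl; intro j _
    apply Finset.sum_congr rfl; intro j' _
    ring
  simp_rw [expand]
  rw [Finset.sum_comm]
  have : ∀ j : Fin n, ∑ k : Fin m, ∑ j' : Fin n, (v j * v j') * (W j k * W j' k)
      = ∑ j' : Fin n, (v j * v j') * ((1 : Matrix (Fin n) (Fin n) ℝ) j j') := by
    intro j
    rw [Finset.sum_comm]
    apply Finset.sum_congr rfl; intro j' _
    rw [← Finset.mul_sum, ← hW, Matrix.mul_apply]
    simp [Matrix.transpose_apply]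
  simp_rw [this]
  apply Finset.sum_congr rfl; intro j _
  simp [Matrix.one_apply, Finset.mul_sum]
  ring

lemma sum_range_le_of_vanish {n m : ℕ} (g : ℕ → ℝ) (hg0 : ∀ t, 0 ≤ g t)
    (hgm : ∀ t, m ≤ t → g t = 0) :
    ∑ t ∈ Finset.range n, g t ≤ ∑ t ∈ Finset.range m, g t := by
  have h1 : ∑ t ∈ Finset.range n, g t = ∑ t ∈ Finset.range (min n m), g t := by
    symm
    apply Finset.sum_subset (Finset.range_subset_range.2 (min_le_left _ _))
    intro t ht hnt
    simp only [Finset.mem_range] at ht hnt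
    exact hgm t (by omega)
  rw [h1]
  exact Finset.sum_le_sum_of_subset_of_nonneg (Finset.range_subset_range.2 (min_le_right _ _))
    (fun t _ _ => hg0 t)

lemma fin_sum_eq_sum_range {n : ℕ} (f : Fin n → ℝ) :
    ∑ i : Fin n, f i = ∑ t ∈ Finset.range n, (if h : t < n then f ⟨t, h⟩ else 0) := by
  rw [← Fin.sum_univ_eq_sum_range]
  apply Finset.sum_congr rfl; intro i _
  rw [dif_pos i.2]

-- restrict a Fin n sum supported on the first q coordinates
lemma sum_fin_restrict {n q : ℕ} (hq : q ≤ n) (f : Fin n → ℝ)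
    (hf : ∀ j : Fin n, q ≤ (j : ℕ) → f j = 0) :
    ∑ j : Fin n, f j = ∑ m : Fin q, f (Fin.castLE hq m) := by
  rw [fin_sum_eq_sum_range f, fin_sum_eq_sum_range (fun m => f (Fin.castLE hq m))]
  rw [show ∑ t ∈ Finset.range q,
        (if h : t < q then f (Fin.castLE hq ⟨t, h⟩) else 0)
      = ∑ t ∈ Finset.range q, (if h : t < n then f ⟨t, h⟩ else 0) from ?_]
  · symm
    apply Finset.sum_subset (Finset.range_subset_range.2 hq)
    intro t ht hnt
    simp only [Finset.mem_range] at ht hnt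
    rw [dif_pos ht]
    exact hf ⟨t, ht⟩ (show q ≤ t by omega)
  · apply Finset.sum_congr rfl; intro t ht
    simp only [Finset.mem_range] at ht
    rw [dif_pos ht, dif_pos (lt_of_lt_of_le ht hq)]
    rfl

lemma sum_castLE_le {r m : ℕ} (hrm : r ≤ m) (h : Fin m → ℝ) (h0 : ∀ c, 0 ≤ h c) :
    ∑ k : Fin r, h (Fin.castLE hrm k) ≤ ∑ c : Fin m, h c := by
  rw [fin_sum_eq_sum_range (fun k : Fin r => h (Fin.castLE hrm ⟨k, k.2⟩)),
      fin_sum_eq_sum_range h]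
  apply le_trans (le_of_eq ?_)
    (Finset.sum_le_sum_of_subset_of_nonneg (Finset.range_subset_range.2 hrm) ?_)
  · apply Finset.sum_congr rfl; intro t ht
    simp only [Finset.mem_range] at ht
    rw [dif_pos ht, dif_pos (lt_of_lt_of_le ht hrm)]
    rfl
  · intro t _ _
    split
    · exact h0 _
    · exact le_refl 0
    
-- cross-dimension comparison of sums
lemma cross_sum_le {n m : ℕ} (f : Fin n → ℝ) (g : Fin m → ℝ)
    (hfg : ∀ (t : ℕ) (h1 : t < n) (h2 : t < m), f ⟨t, h1⟩ ≤ g ⟨t, h2⟩)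
    (hf0 : ∀ j : Fin n, m ≤ (j : ℕ) → f j = 0)
    (hg0 : ∀ c, 0 ≤ g c) :
    ∑ i : Fin n, f i ≤ ∑ j : Fin m, g j := by
  rw [fin_sum_eq_sum_range f, fin_sum_eq_sum_range g]
  set F : ℕ → ℝ := fun t => if h : t < n then f ⟨t, h⟩ else 0 with hF
  set G : ℕ → ℝ := fun t => if h : t < m then g ⟨t, h⟩ else 0 with hG
  have hFG : ∀ t, F t ≤ G t := by
    intro t
    by_cases h1 : t < n
    · by_cases h2 : t < m
      · simp only [hF, hG, dif_pos h1, dif_pos h2]; exact hfg t h1 h2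
      · simp only [hF, hG, dif_pos h1, dif_neg h2]
        rw [hf0 ⟨t, h1⟩ (show m ≤ t by omega)]
    · simp only [hF, hG, dif_neg h1]
      by_cases h2 : t < m
      · rw [dif_pos h2]; exact hg0 _
      · rw [dif_neg h2]
  have hG0 : ∀ t, 0 ≤ G t := by
    intro t; by_cases h2 : t < m
    · simp only [hG, dif_pos h2]; exact hg0 _
    · simp only [hG, dif_neg h2]; exact le_refl 0
  calc ∑ t ∈ Finset.range n, F t ≤ ∑ t ∈ Finset.range n, G t :=
        Finset.sum_le_sum (fun t _ => hFG t)
    _ ≤ ∑ t ∈ Finset.range m, G t := by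
        apply sum_range_le_of_vanish G hG0
        intro t ht; simp only [hG, dif_neg (by omega : ¬ t < m)]

end Helpers
lemma diag_collapse {n m : ℕ} (D : Matrix (Fin n) (Fin m) ℝ)
    (hD : ∀ (i : Fin n) (j : Fin m), (i : ℕ) ≠ (j : ℕ) → D i j = 0)
    (i : Fin n) (v : Fin m → ℝ) :
    (∑ j, D i j * v j) = if h : (i : ℕ) < m then D i ⟨(i : ℕ), h⟩ * v ⟨(i : ℕ), h⟩ else 0 := by
  by_cases h : (i : ℕ) < m
  · rw [dif_pos h]
    apply Finset.sum_eq_single (⟨(i : ℕ), h⟩ : Fin m)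
    · intro j _ hj
      have hne : (i : ℕ) ≠ (j : ℕ) := fun he => hj (Fin.ext he.symm)
      rw [hD i j hne, zero_mul]
    · intro hmem; exact absurd (Finset.mem_univ _) hmem
  · rw [dif_neg h]
    apply Finset.sum_eq_zero; intro j _
    have hne : (i : ℕ) ≠ (j : ℕ) := by have := j.2; omega
    rw [hD i j hne, zero_mul]

set_option maxHeartbeats 1000000 in
/-- the (r+1)-st singular value of `Dh = A + F` is at most `B` when `A` has rank `≤ r`
and `‖F‖_F ≤ B`. -/
lemma sv_tail_le {dx dφ r : ℕ} (hrdx : r ≤ dx) (hrdφ : r ≤ dφ) (hrx : r < dx) (hrφ : r < dφ)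
    (σ : ℕ → ℝ)
    (X : Matrix (Fin dx) (Fin dx) ℝ) (Y : Matrix (Fin dφ) (Fin dφ) ℝ)
    (A Dh F : Matrix (Fin dx) (Fin dφ) ℝ) (B : ℝ) (hB0 : 0 < B)
    (hA : ∀ (i : Fin dx) (j : Fin dφ),
      A i j = ∑ k : Fin r, σ (k : ℕ) * (X i (Fin.castLE hrdx k) * Y j (Fin.castLE hrdφ k)))
    (hAF : ∀ (i : Fin dx) (j : Fin dφ), A i j = Dh i j - F i j)
    (hDdiag : ∀ (i : Fin dx) (j : Fin dφ), (i : ℕ) ≠ (j : ℕ) → Dh i j = 0)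
    (hDnn : ∀ (i : Fin dx) (j : Fin dφ), 0 ≤ Dh i j)
    (hDmono : ∀ (i i' : Fin dx) (j j' : Fin dφ), (i : ℕ) = (j : ℕ) → (i' : ℕ) = (j' : ℕ) →
      (i : ℕ) ≤ (i' : ℕ) → Dh i' j' ≤ Dh i j)
    (hfsqF : (∑ i, ∑ j, F i j ^ 2) ≤ B ^ 2) :
    Dh ⟨r, hrx⟩ ⟨r, hrφ⟩ ≤ B := by
  set σh := Dh ⟨r, hrx⟩ ⟨r, hrφ⟩ with hσh
  have hσh0 : 0 ≤ σh := hDnn _ _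
  have hr1φ : r + 1 ≤ dφ := hrφ
  have hr1x : r + 1 ≤ dx := hrx
  set L : (Fin (r+1) → ℝ) →ₗ[ℝ] (Fin r → ℝ) :=
    { toFun := fun w k => ∑ m : Fin (r+1), Y (Fin.castLE hr1φ m) (Fin.castLE hrdφ k) * w m
      map_add' := by
        intro a b; funext k
        simp [mul_add, Finset.sum_add_distrib]
      map_smul' := by
        intro c a; funext k
        simp only [Pi.smul_apply, smul_eq_mul, RingHom.id_apply, Finset.mul_sum]
        apply Finset.sum_congr rfl; intro m _; ring } with hL
  have hnotinj : ¬ Function.Injective L := by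
    intro hinj
    have hle := LinearMap.finrank_le_finrank_of_injective hinj
    simp only [Module.finrank_fin_fun] at hle
    omega
  rw [Function.not_injective_iff] at hnotinj
  obtain ⟨a, b, hab, hne⟩ := hnotinj
  set u : Fin (r+1) → ℝ := a - b with hu
  have hu0 : u ≠ 0 := sub_ne_zero.2 hne
  have hLu : L u = 0 := by rw [hu, map_sub, hab, sub_self]
  set w : Fin dφ → ℝ := fun j => if h : (j : ℕ) < r + 1 then u ⟨(j : ℕ), h⟩ else 0 with hw
  have hwsupp : ∀ j : Fin dφ, r + 1 ≤ (j : ℕ) → w j = 0 := by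
    intro j hj; simp only [hw, dif_neg (by omega : ¬ (j : ℕ) < r + 1)]
  have hwc : ∀ m : Fin (r+1), w (Fin.castLE hr1φ m) = u m := by
    intro m
    simp only [hw, dif_pos (show ((Fin.castLE hr1φ m : Fin dφ) : ℕ) < r + 1 from m.2)]
    rfl
  have k1 : ∀ k : Fin r, (∑ j, Y j (Fin.castLE hrdφ k) * w j) = 0 := by
    intro k
    rw [sum_fin_restrict hr1φ _ (fun j hj => by rw [hwsupp j hj, mul_zero])]
    calc (∑ m : Fin (r+1), Y (Fin.castLE hr1φ m) (Fin.castLE hrdφ k) * w (Fin.castLE hr1φ m))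
        = ∑ m : Fin (r+1), Y (Fin.castLE hr1φ m) (Fin.castLE hrdφ k) * u m := by
          apply Finset.sum_congr rfl; intro m _; rw [hwc]
      _ = L u k := rfl
      _ = 0 := by rw [hLu]; rfl
  have k2 : ∀ i : Fin dx, (∑ j, A i j * w j) = 0 := by
    intro i
    calc (∑ j, A i j * w j)
        = ∑ j, ∑ k : Fin r, (σ (k : ℕ) * X i (Fin.castLE hrdx k))
            * (Y j (Fin.castLE hrdφ k) * w j) := by
          apply Finset.sum_congr rfl; intro j _
          rw [hA, Finset.sum_mul]
          apply Finset.sum_congr rfl; intro k _; ring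
      _ = ∑ k : Fin r, (σ (k : ℕ) * X i (Fin.castLE hrdx k))
            * (∑ j, Y j (Fin.castLE hrdφ k) * w j) := by
          rw [Finset.sum_comm]
          apply Finset.sum_congr rfl; intro k _
          rw [Finset.mul_sum]
      _ = 0 := by
          apply Finset.sum_eq_zero; intro k _
          rw [k1 k, mul_zero]
  have k3 : ∀ i : Fin dx, (∑ j, Dh i j * w j) = ∑ j, F i j * w j := by
    intro i
    have hsub : (∑ j, Dh i j * w j) - (∑ j, F i j * w j) = 0 := by
      rw [← Finset.sum_sub_distrib, ← k2 i]
      apply Finset.sum_congr rfl; intro j _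
      rw [hAF i j]; ring
    linarith
  set S := ∑ m : Fin (r+1), u m ^ 2 with hS
  have hwS : (∑ j, w j ^ 2) = S := by
    rw [sum_fin_restrict hr1φ _ (fun j hj => by rw [hwsupp j hj]; norm_num)]
    apply Finset.sum_congr rfl; intro m _; rw [hwc]
  have hSpos : 0 < S := by
    obtain ⟨m, hm⟩ := Function.ne_iff.1 hu0
    exact Finset.sum_pos' (fun m _ => sq_nonneg _)
      ⟨m, Finset.mem_univ m, pow_two_pos_of_ne_zero hm⟩
  have k4 : (∑ i, (∑ j, F i j * w j) ^ 2) ≤ B ^ 2 * S := by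
    calc (∑ i, (∑ j, F i j * w j) ^ 2)
        ≤ ∑ i, (∑ j, F i j ^ 2) * (∑ j, w j ^ 2) := by
          apply Finset.sum_le_sum; intro i _
          exact Finset.sum_mul_sq_le_sq_mul_sq univ _ _
      _ = (∑ i, ∑ j, F i j ^ 2) * S := by rw [← Finset.sum_mul, hwS]
      _ ≤ B ^ 2 * S := mul_le_mul_of_nonneg_right hfsqF hSpos.le
  have k5 : σh ^ 2 * S ≤ ∑ i, (∑ j, Dh i j * w j) ^ 2 := by
    have hrw : σh ^ 2 * S = ∑ m : Fin (r+1), σh ^ 2 * u m ^ 2 := by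
      rw [hS, Finset.mul_sum]
    rw [hrw]
    apply cross_sum_le
    · intro t h1 h2
      rw [diag_collapse Dh hDdiag ⟨t, h2⟩ w, dif_pos (show t < dφ by omega)]
      have hwt : w ⟨t, (show t < dφ by omega)⟩ = u ⟨t, h1⟩ := by
        simp only [hw, dif_pos (show t < r + 1 from h1)]
      rw [hwt]
      have hDge : σh ≤ Dh ⟨t, h2⟩ ⟨t, (show t < dφ by omega)⟩ := by
        rw [hσh]
        exact hDmono ⟨t, h2⟩ ⟨r, hrx⟩ ⟨t, (show t < dφ by omega)⟩ ⟨r, hrφ⟩ rfl rfl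
          (show t ≤ r by omega)
      nlinarith [sq_nonneg (u ⟨t, h1⟩), hσh0, hDge,
        mul_self_le_mul_self hσh0 hDge]
    · intro m hm
      exact absurd hm (by have := m.2; omega)
    · intro c; positivity
  have hfinal : σh ^ 2 * S ≤ B ^ 2 * S := by
    calc σh ^ 2 * S ≤ ∑ i, (∑ j, Dh i j * w j) ^ 2 := k5
      _ = ∑ i, (∑ j, F i j * w j) ^ 2 := by
          apply Finset.sum_congr rfl; intro i _; rw [k3]
      _ ≤ B ^ 2 * S := k4
  by_cases hc : σh ≤ B
  · exact hc
  · push_neg at hc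
    exfalso
    have hgt : B ^ 2 < σh ^ 2 := by nlinarith
    nlinarith [mul_lt_mul_of_pos_right hgt hSpos]
set_option maxHeartbeats 1000000 in
/-- core cross bound: `σ_r ‖X₂‖ ≤ σ̂_{r+1} ‖Y₂‖ + B`. -/
lemma cross_bound {dx dφ r : ℕ} (hr0 : 0 < r)
    (hrdx : r ≤ dx) (hrdφ : r ≤ dφ) (hrx : r < dx) (hrφ : r < dφ)
    (σ : ℕ → ℝ) (hmono : ∀ i j : ℕ, i ≤ j → j < r → σ j ≤ σ i) (hσpos : 0 < σ (r - 1))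
    (X : Matrix (Fin dx) (Fin dx) ℝ) (Y : Matrix (Fin dφ) (Fin dφ) ℝ)
    (A Dh F : Matrix (Fin dx) (Fin dφ) ℝ) (B : ℝ) (hB0 : 0 < B)
    (hYYt : Y * Yᵀ = 1)
    (hAY : ∀ (i : Fin dx) (k : Fin r),
      (∑ j, A i j * Y j (Fin.castLE hrdφ k)) = σ (k : ℕ) * X i (Fin.castLE hrdx k))
    (hAF : ∀ (i : Fin dx) (j : Fin dφ), A i j = Dh i j - F i j)
    (hDdiag : ∀ (i : Fin dx) (j : Fin dφ), (i : ℕ) ≠ (j : ℕ) → Dh i j = 0)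
    (hDnn : ∀ (i : Fin dx) (j : Fin dφ), 0 ≤ Dh i j)
    (hDmono : ∀ (i i' : Fin dx) (j j' : Fin dφ), (i : ℕ) = (j : ℕ) → (i' : ℕ) = (j' : ℕ) →
      (i : ℕ) ≤ (i' : ℕ) → Dh i' j' ≤ Dh i j)
    (hfsqF : (∑ i, ∑ j, F i j ^ 2) ≤ B ^ 2) :
    σ (r - 1) * Real.sqrt (∑ i : Fin dx, ∑ k : Fin r,
        (if r ≤ (i : ℕ) then X i (Fin.castLE hrdx k) else 0) ^ 2)
      ≤ Dh ⟨r, hrx⟩ ⟨r, hrφ⟩ * Real.sqrt (∑ j : Fin dφ, ∑ k : Fin r,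
          (if r ≤ (j : ℕ) then Y j (Fin.castLE hrdφ k) else 0) ^ 2) + B := by
  set σh := Dh ⟨r, hrx⟩ ⟨r, hrφ⟩ with hσh
  have hσh0 : 0 ≤ σh := hDnn _ _
  set Xb : Fin dx → Fin r → ℝ :=
    fun i k => if r ≤ (i : ℕ) then X i (Fin.castLE hrdx k) else 0 with hXb
  set Yb : Fin dφ → Fin r → ℝ :=
    fun j k => if r ≤ (j : ℕ) then Y j (Fin.castLE hrdφ k) else 0 with hYb
  set Hf : Fin dx → Fin r → ℝ :=
    fun i k => if r ≤ (i : ℕ) then (∑ j, Dh i j * Y j (Fin.castLE hrdφ k)) else 0 with hHf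
  set Pf : Fin dx → Fin r → ℝ :=
    fun i k => if r ≤ (i : ℕ) then (∑ j, (- F i j) * Y j (Fin.castLE hrdφ k)) else 0 with hPf
  have hsplit : ∀ (i : Fin dx) (k : Fin r), σ (k : ℕ) * Xb i k = Hf i k + Pf i k := by
    intro i k
    by_cases hi : r ≤ (i : ℕ)
    · simp only [hXb, hHf, hPf, if_pos hi]
      rw [← hAY i k, ← Finset.sum_add_distrib]
      apply Finset.sum_congr rfl; intro j _
      rw [hAF i j]; ring
    · simp only [hXb, hHf, hPf, if_neg hi, mul_zero, add_zero]
  have step1 : σ (r-1) * Real.sqrt (∑ i : Fin dx, ∑ k : Fin r, Xb i k ^ 2)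
      ≤ Real.sqrt (∑ i : Fin dx, ∑ k : Fin r, (σ (k : ℕ) * Xb i k) ^ 2) := by
    have heq : (∑ i : Fin dx, ∑ k : Fin r, (σ (r-1) * Xb i k) ^ 2)
        = σ (r-1) ^ 2 * ∑ i : Fin dx, ∑ k : Fin r, Xb i k ^ 2 := by
      simp only [mul_pow, Finset.mul_sum]
    have e : σ (r-1) * Real.sqrt (∑ i : Fin dx, ∑ k : Fin r, Xb i k ^ 2)
        = Real.sqrt (∑ i : Fin dx, ∑ k : Fin r, (σ (r-1) * Xb i k) ^ 2) := by
      rw [heq, Real.sqrt_mul (sq_nonneg _), Real.sqrt_sq hσpos.le]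
    rw [e]
    apply Real.sqrt_le_sqrt
    apply Finset.sum_le_sum; intro i _
    apply Finset.sum_le_sum; intro k _
    have hks : σ (r-1) ≤ σ (k : ℕ) := hmono (k : ℕ) (r-1) (by have := k.2; omega) (by omega)
    nlinarith [sq_nonneg (Xb i k), mul_self_le_mul_self hσpos.le hks]
  have step2 : Real.sqrt (∑ i : Fin dx, ∑ k : Fin r, (σ (k : ℕ) * Xb i k) ^ 2)
      ≤ Real.sqrt (∑ i : Fin dx, ∑ k : Fin r, Hf i k ^ 2)
        + Real.sqrt (∑ i : Fin dx, ∑ k : Fin r, Pf i k ^ 2) := by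
    have hm := minkowski_sum2 Hf Pf
    simp_rw [← hsplit] at hm
    exact hm
  have step3 : Real.sqrt (∑ i : Fin dx, ∑ k : Fin r, Hf i k ^ 2)
      ≤ σh * Real.sqrt (∑ j : Fin dφ, ∑ k : Fin r, Yb j k ^ 2) := by
    have hsum : (∑ i : Fin dx, ∑ k : Fin r, Hf i k ^ 2)
        ≤ σh ^ 2 * ∑ j : Fin dφ, ∑ k : Fin r, Yb j k ^ 2 := by
      rw [Finset.sum_comm]
      have hswap : σh ^ 2 * ∑ j : Fin dφ, ∑ k : Fin r, Yb j k ^ 2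
          = ∑ k : Fin r, ∑ j : Fin dφ, σh ^ 2 * Yb j k ^ 2 := by
        simp only [Finset.mul_sum]
        exact Finset.sum_comm
      rw [hswap]
      apply Finset.sum_le_sum; intro k _
      apply cross_sum_le
      · intro t h1 h2
        by_cases hrt : r ≤ t
        · have hH : Hf ⟨t, h1⟩ k = Dh ⟨t, h1⟩ ⟨t, h2⟩ * Y ⟨t, h2⟩ (Fin.castLE hrdφ k) := by
            simp only [hHf, if_pos hrt]
            rw [diag_collapse Dh hDdiag ⟨t, h1⟩ (fun j => Y j (Fin.castLE hrdφ k)), dif_pos h2]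
          have hYbt : Yb ⟨t, h2⟩ k = Y ⟨t, h2⟩ (Fin.castLE hrdφ k) := by
            simp only [hYb, if_pos hrt]
          have hDle : Dh ⟨t, h1⟩ ⟨t, h2⟩ ≤ σh := by
            rw [hσh]
            exact hDmono ⟨r, hrx⟩ ⟨t, h1⟩ ⟨r, hrφ⟩ ⟨t, h2⟩ rfl rfl hrt
          have hD0 : 0 ≤ Dh ⟨t, h1⟩ ⟨t, h2⟩ := hDnn _ _
          rw [hH, hYbt]
          nlinarith [sq_nonneg (Y ⟨t, h2⟩ (Fin.castLE hrdφ k)),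
            mul_self_le_mul_self hD0 hDle]
        · have hH0 : Hf ⟨t, h1⟩ k = 0 := by simp only [hHf, if_neg hrt]
          rw [hH0]
          simpa using mul_nonneg (sq_nonneg σh) (sq_nonneg (Yb ⟨t, h2⟩ k))
      · intro i hi
        have hHf0 : Hf i k = 0 := by
          simp only [hHf]
          split
          · rw [diag_collapse Dh hDdiag i (fun j => Y j (Fin.castLE hrdφ k)),
              dif_neg (by omega)]
          · rfl
        rw [hHf0]
        norm_num
      · intro c; positivity
    have hsq := Real.sqrt_le_sqrt hsum
    rwa [Real.sqrt_mul (sq_nonneg σh), Real.sqrt_sq hσh0] at hsq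
  have step4 : Real.sqrt (∑ i : Fin dx, ∑ k : Fin r, Pf i k ^ 2) ≤ B := by
    have hP : (∑ i : Fin dx, ∑ k : Fin r, Pf i k ^ 2) ≤ B ^ 2 := by
      have pt : ∀ i : Fin dx, (∑ k : Fin r, Pf i k ^ 2) ≤ ∑ j, F i j ^ 2 := by
        intro i
        have h1' : ∀ k : Fin r, Pf i k ^ 2
            ≤ (fun c : Fin dφ => (∑ j, (- F i j) * Y j c) ^ 2) (Fin.castLE hrdφ k) := by
          intro k
          simp only [hPf]
          split
          · exact le_refl _
          · simpa using sq_nonneg (∑ j, (- F i j) * Y j (Fin.castLE hrdφ k))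
        calc (∑ k : Fin r, Pf i k ^ 2)
            ≤ ∑ k : Fin r, (fun c : Fin dφ => (∑ j, (- F i j) * Y j c) ^ 2)
                (Fin.castLE hrdφ k) := Finset.sum_le_sum (fun k _ => h1' k)
          _ ≤ ∑ c : Fin dφ, (∑ j, (- F i j) * Y j c) ^ 2 :=
              sum_castLE_le hrdφ (fun c : Fin dφ => (∑ j, (- F i j) * Y j c) ^ 2) (fun c => sq_nonneg _)
          _ = ∑ j, (- F i j) ^ 2 := rowsum_sq Y hYYt (fun j => - F i j)
          _ = ∑ j, F i j ^ 2 := by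
              apply Finset.sum_congr rfl; intro j _; ring
      calc (∑ i : Fin dx, ∑ k : Fin r, Pf i k ^ 2) ≤ ∑ i, ∑ j, F i j ^ 2 :=
            Finset.sum_le_sum (fun i _ => pt i)
        _ ≤ B ^ 2 := hfsqF
    have := Real.sqrt_le_sqrt hP
    rwa [Real.sqrt_sq hB0.le] at this
  calc σ (r-1) * Real.sqrt (∑ i : Fin dx, ∑ k : Fin r, Xb i k ^ 2)
      ≤ Real.sqrt (∑ i : Fin dx, ∑ k : Fin r, (σ (k : ℕ) * Xb i k) ^ 2) := step1
    _ ≤ Real.sqrt (∑ i : Fin dx, ∑ k : Fin r, Hf i k ^ 2)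
        + Real.sqrt (∑ i : Fin dx, ∑ k : Fin r, Pf i k ^ 2) := step2
    _ ≤ σh * Real.sqrt (∑ j : Fin dφ, ∑ k : Fin r, Yb j k ^ 2) + B := by
        have := add_le_add step3 step4
        linarith
set_option maxHeartbeats 1000000 in
/-- Cauchy–Schwarz bound for the (2,2) block. -/
lemma block_cs {dx dφ r : ℕ} (hr0 : 0 < r)
    (hrdx : r ≤ dx) (hrdφ : r ≤ dφ)
    (σ : ℕ → ℝ) (hmono : ∀ i j : ℕ, i ≤ j → j < r → σ j ≤ σ i) (hσpos : 0 < σ (r - 1))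
    (X : Matrix (Fin dx) (Fin dx) ℝ) (Y : Matrix (Fin dφ) (Fin dφ) ℝ)
    (A : Matrix (Fin dx) (Fin dφ) ℝ)
    (hA : ∀ (i : Fin dx) (j : Fin dφ),
      A i j = ∑ k : Fin r, σ (k : ℕ) * (X i (Fin.castLE hrdx k) * Y j (Fin.castLE hrdφ k))) :
    Real.sqrt (∑ i : Fin dx, ∑ j : Fin dφ,
        (if r ≤ (i : ℕ) ∧ r ≤ (j : ℕ) then A i j ^ 2 else 0))
      ≤ σ 0 * (Real.sqrt (∑ i : Fin dx, ∑ k : Fin r,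
            (if r ≤ (i : ℕ) then X i (Fin.castLE hrdx k) else 0) ^ 2)
          * Real.sqrt (∑ j : Fin dφ, ∑ k : Fin r,
            (if r ≤ (j : ℕ) then Y j (Fin.castLE hrdφ k) else 0) ^ 2)) := by
  have hσ0pos : 0 < σ 0 := lt_of_lt_of_le hσpos (hmono 0 (r-1) (Nat.zero_le _) (by omega))
  set Xb : Fin dx → Fin r → ℝ :=
    fun i k => if r ≤ (i : ℕ) then X i (Fin.castLE hrdx k) else 0 with hXb
  set Yb : Fin dφ → Fin r → ℝ :=
    fun j k => if r ≤ (j : ℕ) then Y j (Fin.castLE hrdφ k) else 0 with hYb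
  have hxq0 : (0:ℝ) ≤ ∑ i : Fin dx, ∑ k : Fin r, Xb i k ^ 2 := by positivity
  have pt : ∀ (i : Fin dx) (j : Fin dφ),
      (if r ≤ (i : ℕ) ∧ r ≤ (j : ℕ) then A i j ^ 2 else 0)
        ≤ σ 0 ^ 2 * ((∑ k : Fin r, Xb i k ^ 2) * (∑ k : Fin r, Yb j k ^ 2)) := by
    intro i j
    split
    case isTrue h =>
      obtain ⟨hi, hj⟩ := h
      have hAe : A i j = ∑ k : Fin r, (σ (k : ℕ) * Xb i k) * Yb j k := by
        rw [hA]
        apply Finset.sum_congr rfl; intro k _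
        simp only [hXb, hYb, if_pos hi, if_pos hj]; ring
      rw [hAe]
      have hcs := Finset.sum_mul_sq_le_sq_mul_sq univ
        (fun k : Fin r => σ (k : ℕ) * Xb i k) (fun k => Yb j k)
      have hXbound : (∑ k : Fin r, (σ (k : ℕ) * Xb i k) ^ 2)
          ≤ σ 0 ^ 2 * ∑ k : Fin r, Xb i k ^ 2 := by
        rw [Finset.mul_sum]
        apply Finset.sum_le_sum; intro k _
        have h0k : σ (k : ℕ) ≤ σ 0 := hmono 0 (k : ℕ) (Nat.zero_le _) k.2
        have hks : 0 ≤ σ (k : ℕ) :=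
          le_of_lt (lt_of_lt_of_le hσpos (hmono (k : ℕ) (r-1) (by have := k.2; omega) (by omega)))
        nlinarith [sq_nonneg (Xb i k), mul_self_le_mul_self hks h0k]
      have hyb0 : (0:ℝ) ≤ ∑ k : Fin r, Yb j k ^ 2 := by positivity
      calc (∑ k : Fin r, (σ (k : ℕ) * Xb i k) * Yb j k) ^ 2
          ≤ (∑ k : Fin r, (σ (k : ℕ) * Xb i k) ^ 2) * (∑ k : Fin r, Yb j k ^ 2) := hcs
        _ ≤ (σ 0 ^ 2 * ∑ k : Fin r, Xb i k ^ 2) * (∑ k : Fin r, Yb j k ^ 2) :=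
            mul_le_mul_of_nonneg_right hXbound hyb0
        _ = σ 0 ^ 2 * ((∑ k : Fin r, Xb i k ^ 2) * (∑ k : Fin r, Yb j k ^ 2)) := by ring
    case isFalse h => positivity
  have hsum : (∑ i : Fin dx, ∑ j : Fin dφ,
      (if r ≤ (i : ℕ) ∧ r ≤ (j : ℕ) then A i j ^ 2 else 0))
      ≤ σ 0 ^ 2 * ((∑ i : Fin dx, ∑ k : Fin r, Xb i k ^ 2)
          * (∑ j : Fin dφ, ∑ k : Fin r, Yb j k ^ 2)) := by
    calc (∑ i : Fin dx, ∑ j : Fin dφ, (if r ≤ (i : ℕ) ∧ r ≤ (j : ℕ) then A i j ^ 2 else 0))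
        ≤ ∑ i : Fin dx, ∑ j : Fin dφ,
            σ 0 ^ 2 * ((∑ k : Fin r, Xb i k ^ 2) * (∑ k : Fin r, Yb j k ^ 2)) := by
          apply Finset.sum_le_sum; intro i _
          apply Finset.sum_le_sum; intro j _
          exact pt i j
      _ = σ 0 ^ 2 * ((∑ i : Fin dx, ∑ k : Fin r, Xb i k ^ 2)
            * (∑ j : Fin dφ, ∑ k : Fin r, Yb j k ^ 2)) := by
          have inner : ∀ i : Fin dx,
              (∑ j : Fin dφ, σ 0 ^ 2 * ((∑ k : Fin r, Xb i k ^ 2) * (∑ k : Fin r, Yb j k ^ 2)))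
                = (σ 0 ^ 2 * (∑ k : Fin r, Xb i k ^ 2))
                    * (∑ j : Fin dφ, ∑ k : Fin r, Yb j k ^ 2) := by
            intro i
            rw [Finset.mul_sum]
            apply Finset.sum_congr rfl; intro j _; ring
          simp_rw [inner]
          rw [← Finset.sum_mul, ← Finset.mul_sum]
          ring
  have hsq := Real.sqrt_le_sqrt hsum
  refine hsq.trans (le_of_eq ?_)
  rw [Real.sqrt_mul (sq_nonneg _), Real.sqrt_mul hxq0, Real.sqrt_sq hσ0pos.le]
set_option maxHeartbeats 2000000 in
/-- **Error induced by rotation-truncation-vectorization (Corollary 1).**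
There is an absolute constant `C₂ > 0` such that: if `Θ*` has rank `r` with
singular values `σ 0 ≥ ⋯ ≥ σ (r-1) > 0` (exhibited by an SVD
`Θ* = U* D* (V*)ᵀ`), `Θ̂ = Û D̂ V̂ᵀ` is an SVD of the estimate, and
`‖Θ̂ − Θ*‖_F ≤ B` with `0 < B ≤ σ (r-1) / 2`, then the lower-right block of the
rotation `Θ*_r = Ûᵀ Θ* V̂` satisfies
`‖(Θ*_r)₂₂‖_F ≤ C₂ · (σ 0 / σ (r-1)²) · B²`. -/
theorem rtv_error_induced :
    ∃ C₂ : ℝ, 0 < C₂ ∧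
      ∀ (dx dφ r : ℕ), 0 < r → r ≤ dx → r ≤ dφ →
      ∀ (Ustar : Matrix (Fin dx) (Fin dx) ℝ) (Vstar : Matrix (Fin dφ) (Fin dφ) ℝ)
        (σ : ℕ → ℝ) (Dstar : Matrix (Fin dx) (Fin dφ) ℝ)
        (Θstar Θhat : Matrix (Fin dx) (Fin dφ) ℝ)
        (Uh : Matrix (Fin dx) (Fin dx) ℝ) (Dh : Matrix (Fin dx) (Fin dφ) ℝ)
        (Vh : Matrix (Fin dφ) (Fin dφ) ℝ) (B : ℝ),
        -- SVD of the true rank-r matrix Θ*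
        Ustarᵀ * Ustar = 1 → Ustar * Ustarᵀ = 1 →
        Vstarᵀ * Vstar = 1 → Vstar * Vstarᵀ = 1 →
        (∀ (i : Fin dx) (j : Fin dφ),
          Dstar i j = if (i : ℕ) = (j : ℕ) ∧ (i : ℕ) < r then σ (i : ℕ) else 0) →
        (∀ i j : ℕ, i ≤ j → j < r → σ j ≤ σ i) →
        0 < σ (r - 1) →
        Θstar = Ustar * Dstar * Vstarᵀ →
        -- SVD of the estimate Θ̂
        Uhᵀ * Uh = 1 → Uh * Uhᵀ = 1 →
        Vhᵀ * Vh = 1 → Vh * Vhᵀ = 1 →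
        (∀ (i : Fin dx) (j : Fin dφ), (i : ℕ) ≠ (j : ℕ) → Dh i j = 0) →
        (∀ (i : Fin dx) (j : Fin dφ), 0 ≤ Dh i j) →
        (∀ (i i' : Fin dx) (j j' : Fin dφ), (i : ℕ) = (j : ℕ) → (i' : ℕ) = (j' : ℕ) →
          (i : ℕ) ≤ (i' : ℕ) → Dh i' j' ≤ Dh i j) →
        Θhat = Uh * Dh * Vhᵀ →
        -- closeness of the estimate
        0 < B → B ≤ σ (r - 1) / 2 →
        Real.sqrt (∑ i, ∑ j, (Θhat - Θstar) i j ^ 2) ≤ B →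
        -- conclusion : Frobenius norm of the (2,2) block of Ûᵀ Θ* V̂
        Real.sqrt (∑ i : Fin dx, ∑ j : Fin dφ,
            if r ≤ (i : ℕ) ∧ r ≤ (j : ℕ) then ((Uhᵀ * Θstar * Vh) i j) ^ 2 else 0) ≤
          C₂ * (σ 0 / σ (r - 1) ^ 2) * B ^ 2 := by
  refine ⟨4, by norm_num, ?_⟩
  intro dx dφ r hr0 hrdx hrdφ Ustar Vstar σ Dstar Θstar Θhat Uh Dh Vh B
    hU1 hU2 hV1 hV2 hDstar hmono hσpos hΘs hUh1 hUh2 hVh1 hVh2 hDdiag hDnn hDmono hΘh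
    hB0 hBs hclose
  have hσ0pos : 0 < σ 0 := lt_of_lt_of_le hσpos (hmono 0 (r-1) (Nat.zero_le _) (by omega))
  have hRHSpos : 0 < 4 * (σ 0 / σ (r - 1) ^ 2) * B ^ 2 :=
    mul_pos (mul_pos (by norm_num) (div_pos hσ0pos (pow_pos hσpos 2))) (pow_pos hB0 2)
  by_cases hcase : r < dx ∧ r < dφ
  case neg =>
    have hzero : (∑ i : Fin dx, ∑ j : Fin dφ,
        if r ≤ (i : ℕ) ∧ r ≤ (j : ℕ) then ((Uhᵀ * Θstar * Vh) i j) ^ 2 else 0) = 0 := by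
      apply Finset.sum_eq_zero; intro i _
      apply Finset.sum_eq_zero; intro j _
      rw [if_neg]
      rintro ⟨h1, h2⟩
      rcases not_and_or.1 hcase with h | h
      · exact h (lt_of_le_of_lt h1 i.2)
      · exact h (lt_of_le_of_lt h2 j.2)
    rw [hzero, Real.sqrt_zero]
    exact hRHSpos.le
  obtain ⟨hrx, hrφ⟩ := hcase
  -- notation
  set X := Uhᵀ * Ustar with hXdef
  set Y := Vhᵀ * Vstar with hYdef
  set A := Uhᵀ * Θstar * Vh with hAdef
  set F := Uhᵀ * (Θhat - Θstar) * Vh with hFdef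
  -- orthogonality facts
  have hYYt : Y * Yᵀ = 1 := by
    rw [hYdef, Matrix.transpose_mul, Matrix.transpose_transpose, Matrix.mul_assoc,
      ← Matrix.mul_assoc Vstar, hV2, Matrix.one_mul, hVh1]
  have hYtY : Yᵀ * Y = 1 := by
    rw [hYdef, Matrix.transpose_mul, Matrix.transpose_transpose, Matrix.mul_assoc,
      ← Matrix.mul_assoc Vh, hVh2, Matrix.one_mul, hV1]
  have hXXt : X * Xᵀ = 1 := by
    rw [hXdef, Matrix.transpose_mul, Matrix.transpose_transpose, Matrix.mul_assoc,
      ← Matrix.mul_assoc Ustar, hU2, Matrix.one_mul, hUh1]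
  have hXtX : Xᵀ * X = 1 := by
    rw [hXdef, Matrix.transpose_mul, Matrix.transpose_transpose, Matrix.mul_assoc,
      ← Matrix.mul_assoc Uh, hUh2, Matrix.one_mul, hU1]
  -- entry formula for A
  have hAXDY : A = X * Dstar * Yᵀ := by
    rw [hAdef, hΘs, hXdef, hYdef, Matrix.transpose_mul, Matrix.transpose_transpose]
    simp only [Matrix.mul_assoc]
  have hA : ∀ (i : Fin dx) (j : Fin dφ),
      A i j = ∑ k : Fin r, σ (k : ℕ) * (X i (Fin.castLE hrdx k) * Y j (Fin.castLE hrdφ k)) := by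
    intro i j
    rw [hAXDY, Matrix.mul_apply]
    have inner : ∀ b : Fin dφ, (X * Dstar) i b
        = if hb : (b : ℕ) < r then σ (b : ℕ) * X i ⟨(b : ℕ), lt_of_lt_of_le hb hrdx⟩ else 0 := by
      intro b
      rw [Matrix.mul_apply]
      by_cases hb : (b : ℕ) < r
      · rw [dif_pos hb]
        rw [Finset.sum_eq_single (⟨(b : ℕ), lt_of_lt_of_le hb hrdx⟩ : Fin dx)]
        · rw [hDstar, if_pos ⟨rfl, hb⟩]; ring
        · intro a _ ha
          rw [hDstar, if_neg, mul_zero]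
          rintro ⟨h1, _⟩
          exact ha (Fin.ext h1)
        · intro h; exact absurd (Finset.mem_univ _) h
      · rw [dif_neg hb]
        apply Finset.sum_eq_zero
        intro a _
        rw [hDstar, if_neg, mul_zero]
        rintro ⟨h1, h2⟩
        exact hb (h1 ▸ h2)
    calc (∑ b : Fin dφ, (X * Dstar) i b * Yᵀ b j)
        = ∑ b : Fin dφ,
            (if hb : (b : ℕ) < r then σ (b : ℕ) * X i ⟨(b : ℕ), lt_of_lt_of_le hb hrdx⟩ else 0)
              * Y j b := by
          apply Finset.sum_congr rfl; intro b _
          rw [inner b, Matrix.transpose_apply]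
      _ = ∑ k : Fin r, σ (k : ℕ) * (X i (Fin.castLE hrdx k) * Y j (Fin.castLE hrdφ k)) := by
          rw [sum_fin_restrict hrdφ _ (fun b hb => by rw [dif_neg (by omega), zero_mul])]
          apply Finset.sum_congr rfl; intro k _
          rw [dif_pos (show ((Fin.castLE hrdφ k : Fin dφ) : ℕ) < r from k.2)]
          show σ (k : ℕ) * X i (Fin.castLE hrdx k) * Y j (Fin.castLE hrdφ k)
              = σ (k : ℕ) * (X i (Fin.castLE hrdx k) * Y j (Fin.castLE hrdφ k))
          rw [mul_assoc]
  -- A = Dh - F entrywise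
  have hDhEq : Uhᵀ * Θhat * Vh = Dh := by
    rw [hΘh]
    calc Uhᵀ * (Uh * Dh * Vhᵀ) * Vh = Uhᵀ * Uh * Dh * (Vhᵀ * Vh) := by
          simp only [Matrix.mul_assoc]
      _ = Dh := by rw [hUh1, hVh1, Matrix.one_mul, Matrix.mul_one]
  have hFDA : F = Dh - A := by
    rw [hFdef, Matrix.mul_sub, Matrix.sub_mul, hDhEq, hAdef]
  have hAF : ∀ (i : Fin dx) (j : Fin dφ), A i j = Dh i j - F i j := by
    intro i j
    have h := congrFun (congrFun hFDA i) j
    rw [Matrix.sub_apply] at h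
    linarith
  -- Frobenius norm of F
  have hfsqF : (∑ i, ∑ j, F i j ^ 2) ≤ B ^ 2 := by
    have step1 : (∑ i, ∑ j, F i j ^ 2) = ∑ i, ∑ c, (Uhᵀ * (Θhat - Θstar)) i c ^ 2 := by
      apply Finset.sum_congr rfl; intro i _
      have hrow : ∀ j, F i j = ∑ c, (Uhᵀ * (Θhat - Θstar)) i c * Vh c j := by
        intro j; rw [hFdef, Matrix.mul_apply]
      simp_rw [hrow]
      exact rowsum_sq Vh hVh2 (fun c => (Uhᵀ * (Θhat - Θstar)) i c)
    have step2 : (∑ i, ∑ c, (Uhᵀ * (Θhat - Θstar)) i c ^ 2)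
        = ∑ a, ∑ c, (Θhat - Θstar) a c ^ 2 := by
      rw [Finset.sum_comm]
      rw [show (∑ a : Fin dx, ∑ c : Fin dφ, (Θhat - Θstar) a c ^ 2)
          = ∑ c : Fin dφ, ∑ a : Fin dx, (Θhat - Θstar) a c ^ 2 from Finset.sum_comm]
      apply Finset.sum_congr rfl; intro c _
      have hcol : ∀ i, (Uhᵀ * (Θhat - Θstar)) i c = ∑ a, (Θhat - Θstar) a c * Uh a i := by
        intro i
        rw [Matrix.mul_apply]
        apply Finset.sum_congr rfl; intro a _
        rw [Matrix.transpose_apply]; ring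
      simp_rw [hcol]
      exact rowsum_sq Uh hUh2 (fun a => (Θhat - Θstar) a c)
    rw [step1, step2]
    have hS : (0:ℝ) ≤ ∑ a, ∑ c, (Θhat - Θstar) a c ^ 2 := by positivity
    calc (∑ a, ∑ c, (Θhat - Θstar) a c ^ 2)
        = Real.sqrt (∑ a, ∑ c, (Θhat - Θstar) a c ^ 2) ^ 2 := (Real.sq_sqrt hS).symm
      _ ≤ B ^ 2 := pow_le_pow_left₀ (Real.sqrt_nonneg _) hclose 2
  -- diagonal collapse lemmas
  have hdiag : ∀ (i : Fin dx) (v : Fin dφ → ℝ),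
      (∑ j, Dh i j * v j)
        = if h : (i : ℕ) < dφ then Dh i ⟨(i : ℕ), h⟩ * v ⟨(i : ℕ), h⟩ else 0 := by
    intro i v
    by_cases h : (i : ℕ) < dφ
    · rw [dif_pos h]
      apply Finset.sum_eq_single (⟨(i : ℕ), h⟩ : Fin dφ)
      · intro j _ hj
        have hne : (i : ℕ) ≠ (j : ℕ) := fun he => hj (Fin.ext he.symm)
        rw [hDdiag i j hne, zero_mul]
      · intro hmem; exact absurd (Finset.mem_univ _) hmem
    · rw [dif_neg h]
      apply Finset.sum_eq_zero; intro j _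
      have hne : (i : ℕ) ≠ (j : ℕ) := by have := j.2; omega
      rw [hDdiag i j hne, zero_mul]
  have hdiagcol : ∀ (j : Fin dφ) (v : Fin dx → ℝ),
      (∑ i, Dh i j * v i)
        = if h : (j : ℕ) < dx then Dh ⟨(j : ℕ), h⟩ j * v ⟨(j : ℕ), h⟩ else 0 := by
    intro j v
    by_cases h : (j : ℕ) < dx
    · rw [dif_pos h]
      apply Finset.sum_eq_single (⟨(j : ℕ), h⟩ : Fin dx)
      · intro i _ hi
        have hne : (i : ℕ) ≠ (j : ℕ) := fun he => hi (Fin.ext he)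
        rw [hDdiag i j hne, zero_mul]
      · intro hmem; exact absurd (Finset.mem_univ _) hmem
    · rw [dif_neg h]
      apply Finset.sum_eq_zero; intro i _
      have hne : (i : ℕ) ≠ (j : ℕ) := by have := i.2; omega
      rw [hDdiag i j hne, zero_mul]
  -- orthonormality of columns of Y and X
  have horthY : ∀ a b : Fin dφ, (∑ j, Y j a * Y j b) = if a = b then (1:ℝ) else 0 := by
    intro a b
    calc (∑ j, Y j a * Y j b) = (Yᵀ * Y) a b := by
          rw [Matrix.mul_apply]
          apply Finset.sum_congr rfl; intro j _
          rw [Matrix.transpose_apply]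
      _ = (1 : Matrix (Fin dφ) (Fin dφ) ℝ) a b := by rw [hYtY]
      _ = if a = b then 1 else 0 := Matrix.one_apply
  have horthX : ∀ a b : Fin dx, (∑ i, X i a * X i b) = if a = b then (1:ℝ) else 0 := by
    intro a b
    calc (∑ i, X i a * X i b) = (Xᵀ * X) a b := by
          rw [Matrix.mul_apply]
          apply Finset.sum_congr rfl; intro i _
          rw [Matrix.transpose_apply]
      _ = (1 : Matrix (Fin dx) (Fin dx) ℝ) a b := by rw [hXtX]
      _ = if a = b then 1 else 0 := Matrix.one_apply
  -- collapse identities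
  have hAY : ∀ (i : Fin dx) (k : Fin r),
      (∑ j, A i j * Y j (Fin.castLE hrdφ k)) = σ (k : ℕ) * X i (Fin.castLE hrdx k) := by
    intro i k
    calc (∑ j, A i j * Y j (Fin.castLE hrdφ k))
        = ∑ j, ∑ k' : Fin r, (σ (k' : ℕ) * X i (Fin.castLE hrdx k'))
            * (Y j (Fin.castLE hrdφ k') * Y j (Fin.castLE hrdφ k)) := by
          apply Finset.sum_congr rfl; intro j _
          rw [hA, Finset.sum_mul]
          apply Finset.sum_congr rfl; intro k' _; ring
      _ = ∑ k' : Fin r, (σ (k' : ℕ) * X i (Fin.castLE hrdx k'))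
            * (∑ j, Y j (Fin.castLE hrdφ k') * Y j (Fin.castLE hrdφ k)) := by
          rw [Finset.sum_comm]
          apply Finset.sum_congr rfl; intro k' _
          rw [Finset.mul_sum]
      _ = ∑ k' : Fin r, (σ (k' : ℕ) * X i (Fin.castLE hrdx k'))
            * (if k' = k then (1:ℝ) else 0) := by
          apply Finset.sum_congr rfl; intro k' _
          rw [horthY]
          congr 1
          simp [Fin.castLE_inj]
      _ = σ (k : ℕ) * X i (Fin.castLE hrdx k) := by
          simp [mul_ite, mul_one, mul_zero]
  have hXA : ∀ (j : Fin dφ) (k : Fin r),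
      (∑ i, A i j * X i (Fin.castLE hrdx k)) = σ (k : ℕ) * Y j (Fin.castLE hrdφ k) := by
    intro j k
    calc (∑ i, A i j * X i (Fin.castLE hrdx k))
        = ∑ i, ∑ k' : Fin r, (σ (k' : ℕ) * Y j (Fin.castLE hrdφ k'))
            * (X i (Fin.castLE hrdx k') * X i (Fin.castLE hrdx k)) := by
          apply Finset.sum_congr rfl; intro i _
          rw [hA, Finset.sum_mul]
          apply Finset.sum_congr rfl; intro k' _; ring
      _ = ∑ k' : Fin r, (σ (k' : ℕ) * Y j (Fin.castLE hrdφ k'))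
            * (∑ i, X i (Fin.castLE hrdx k') * X i (Fin.castLE hrdx k)) := by
          rw [Finset.sum_comm]
          apply Finset.sum_congr rfl; intro k' _
          rw [Finset.mul_sum]
      _ = ∑ k' : Fin r, (σ (k' : ℕ) * Y j (Fin.castLE hrdφ k'))
            * (if k' = k then (1:ℝ) else 0) := by
          apply Finset.sum_congr rfl; intro k' _
          rw [horthX]
          congr 1
          simp [Fin.castLE_inj]
      _ = σ (k : ℕ) * Y j (Fin.castLE hrdφ k) := by
          simp [mul_ite, mul_one, mul_zero]
  -- abbreviations for the block norms
  set x := Real.sqrt (∑ i : Fin dx, ∑ k : Fin r,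
      (if r ≤ (i : ℕ) then X i (Fin.castLE hrdx k) else 0) ^ 2) with hxdef
  set y := Real.sqrt (∑ j : Fin dφ, ∑ k : Fin r,
      (if r ≤ (j : ℕ) then Y j (Fin.castLE hrdφ k) else 0) ^ 2) with hydef
  have hx0 : 0 ≤ x := Real.sqrt_nonneg _
  have hy0 : 0 ≤ y := Real.sqrt_nonneg _
  set σh := Dh ⟨r, hrx⟩ ⟨r, hrφ⟩ with hσh
  -- apply the three core lemmas
  have h1 : σh ≤ B :=
    sv_tail_le hrdx hrdφ hrx hrφ σ X Y A Dh F B hB0 hA hAF hDdiag hDnn hDmono hfsqF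
  have h2 : σ (r-1) * x ≤ σh * y + B :=
    cross_bound hr0 hrdx hrdφ hrx hrφ σ hmono hσpos X Y A Dh F B hB0 hYYt hAY hAF
      hDdiag hDnn hDmono hfsqF
  have h3 : σ (r-1) * y ≤ σh * x + B := by
    have hAY' : ∀ (j : Fin dφ) (k : Fin r),
        (∑ i, Aᵀ j i * X i (Fin.castLE hrdx k)) = σ (k : ℕ) * Y j (Fin.castLE hrdφ k) := by
      intro j k
      simpa [Matrix.transpose_apply] using hXA j k
    have hAF' : ∀ (j : Fin dφ) (i : Fin dx), Aᵀ j i = Dhᵀ j i - Fᵀ j i := by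
      intro j i
      simp only [Matrix.transpose_apply]
      exact hAF i j
    have hDdiag' : ∀ (j : Fin dφ) (i : Fin dx), (j : ℕ) ≠ (i : ℕ) → Dhᵀ j i = 0 := by
      intro j i h
      simp only [Matrix.transpose_apply]
      exact hDdiag i j (Ne.symm h)
    have hDnn' : ∀ (j : Fin dφ) (i : Fin dx), 0 ≤ Dhᵀ j i := by
      intro j i
      simp only [Matrix.transpose_apply]
      exact hDnn i j
    have hDmono' : ∀ (j j' : Fin dφ) (i i' : Fin dx), (j : ℕ) = (i : ℕ) →
        (j' : ℕ) = (i' : ℕ) → (j : ℕ) ≤ (j' : ℕ) → Dhᵀ j' i' ≤ Dhᵀ j i := by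
      intro j j' i i' e1 e2 hle
      simp only [Matrix.transpose_apply]
      exact hDmono i i' j j' e1.symm e2.symm (by omega)
    have hfsqF' : (∑ j : Fin dφ, ∑ i : Fin dx, (Fᵀ) j i ^ 2) ≤ B ^ 2 := by
      calc (∑ j : Fin dφ, ∑ i : Fin dx, (Fᵀ) j i ^ 2)
          = ∑ i : Fin dx, ∑ j : Fin dφ, F i j ^ 2 := Finset.sum_comm
        _ ≤ B ^ 2 := hfsqF
    have hc := cross_bound hr0 hrdφ hrdx hrφ hrx σ hmono hσpos Y X (Aᵀ) (Dhᵀ) (Fᵀ) B hB0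
      hXXt hAY' hAF' hDdiag' hDnn' hDmono' hfsqF'
    have hDT : (Dhᵀ) ⟨r, hrφ⟩ ⟨r, hrx⟩ = σh := rfl
    rw [hDT] at hc
    rw [hxdef, hydef]
    exact hc
  have h5 : Real.sqrt (∑ i : Fin dx, ∑ j : Fin dφ,
      (if r ≤ (i : ℕ) ∧ r ≤ (j : ℕ) then A i j ^ 2 else 0)) ≤ σ 0 * (x * y) :=
    block_cs hr0 hrdx hrdφ σ hmono hσpos X Y A hA
  -- assemble
  have hσh0 : 0 ≤ σh := hDnn _ _
  have h2' : σ (r-1) * x ≤ B * y + B := by nlinarith [h2, h1, hy0]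
  have h3' : σ (r-1) * y ≤ B * x + B := by nlinarith [h3, h1, hx0]
  have h2B : 2 * B ≤ σ (r-1) := by linarith
  have hsx : σ (r-1) * x ≤ 2 * B := by
    nlinarith [mul_le_mul_of_nonneg_left h3' hB0.le,
      mul_le_mul_of_nonneg_left h2' hσpos.le,
      mul_nonneg hx0 (show (0:ℝ) ≤ σ (r-1) ^ 2 - 4 * B ^ 2 by nlinarith),
      mul_le_mul_of_nonneg_left h2B hB0.le]
  have hsy : σ (r-1) * y ≤ 2 * B := by
    nlinarith [mul_le_mul_of_nonneg_left h2' hB0.le,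
      mul_le_mul_of_nonneg_left h3' hσpos.le,
      mul_nonneg hy0 (show (0:ℝ) ≤ σ (r-1) ^ 2 - 4 * B ^ 2 by nlinarith),
      mul_le_mul_of_nonneg_left h2B hB0.le]
  refine h5.trans ?_
  have hxy : x * y ≤ 4 * B ^ 2 / σ (r-1) ^ 2 := by
    rw [le_div_iff₀ (pow_pos hσpos 2)]
    nlinarith [mul_le_mul hsx hsy (mul_nonneg hσpos.le hy0) (by linarith : (0:ℝ) ≤ 2 * B)]
  calc σ 0 * (x * y) ≤ σ 0 * (4 * B ^ 2 / σ (r-1) ^ 2) :=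
        mul_le_mul_of_nonneg_left hxy hσ0pos.le
    _ = 4 * (σ 0 / σ (r-1) ^ 2) * B ^ 2 := by ring
end

section
/- Let k be a positive integer, Π a nonempty set (the set of policies), g : Π → ℝ^k a function, W ∈ ℝ^{k×k} a symmetric positive definite matrix, C ≥ 0, and θ*, θ̂ ∈ ℝ^k with ‖θ̂ − θ*‖_W ≤ C. Define the pessimistic value Ĵ(π) = inf{⟨g(π), θ⟩ : θ ∈ ℝ^k, ‖θ − θ̂‖_W ≤ C}, and suppose π̂ ∈ Π satisfies Ĵ(π̂) ≥ Ĵ(π) for all π ∈ Π. Then for every π* ∈ Π, the sub-optimality gap satisfies ⟨g(π*), θ*⟩ − ⟨g(π̂), θ*⟩ ≤ 2·C·‖g(π*)‖_{W^{-1}}. -/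
open Matrix

section Aux
variable {k : ℕ} {W : Matrix (Fin k) (Fin k) ℝ}

lemma auxB_nonneg (hW : W.PosDef) (x : Fin k → ℝ) : 0 ≤ x ⬝ᵥ (W *ᵥ x) := by
  simpa using hW.posSemidef.re_dotProduct_nonneg x

lemma auxWT (hW : W.PosDef) : Wᵀ = W := by
  have h := hW.isHermitian
  rwa [Matrix.IsHermitian, Matrix.conjTranspose_eq_transpose_of_trivial] at h

lemma auxB_symm (hW : W.PosDef) (x y : Fin k → ℝ) : x ⬝ᵥ (W *ᵥ y) = y ⬝ᵥ (W *ᵥ x) := by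
  rw [Matrix.dotProduct_mulVec, ← Matrix.vecMul_transpose, auxWT hW, dotProduct_comm]

lemma auxB_cs (hW : W.PosDef) (x y : Fin k → ℝ) :
    x ⬝ᵥ (W *ᵥ y) ≤ Real.sqrt (x ⬝ᵥ (W *ᵥ x)) * Real.sqrt (y ⬝ᵥ (W *ᵥ y)) := by
  set a := y ⬝ᵥ (W *ᵥ y) with ha
  set b := x ⬝ᵥ (W *ᵥ y) with hb
  set c := x ⬝ᵥ (W *ᵥ x) with hc
  have hquad : ∀ t : ℝ, 0 ≤ a * (t * t) + (2 * b) * t + c := by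
    intro t
    have h0 : 0 ≤ (x + t • y) ⬝ᵥ (W *ᵥ (x + t • y)) := auxB_nonneg hW _
    have hexp : (x + t • y) ⬝ᵥ (W *ᵥ (x + t • y)) = a * (t * t) + (2 * b) * t + c := by
      rw [Matrix.mulVec_add, Matrix.mulVec_smul, add_dotProduct,
        smul_dotProduct, dotProduct_add, dotProduct_add,
        dotProduct_smul, dotProduct_smul]
      have hs := auxB_symm hW y x
      simp only [smul_eq_mul]
      rw [← hb, ← hc, ← ha, hs, ← hb]
      ring
    linarith [hexp ▸ h0]
  have hd : discrim a (2 * b) c ≤ 0 := discrim_le_zero hquad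
  rw [discrim] at hd
  have hbb : b ^ 2 ≤ c * a := by nlinarith
  calc b ≤ |b| := le_abs_self b
    _ = Real.sqrt (b ^ 2) := (Real.sqrt_sq_eq_abs b).symm
    _ ≤ Real.sqrt (c * a) := Real.sqrt_le_sqrt hbb
    _ = Real.sqrt c * Real.sqrt a := Real.sqrt_mul (auxB_nonneg hW x) _

lemma auxB_tri (hW : W.PosDef) (x y : Fin k → ℝ) :
    Real.sqrt ((x + y) ⬝ᵥ (W *ᵥ (x + y))) ≤
      Real.sqrt (x ⬝ᵥ (W *ᵥ x)) + Real.sqrt (y ⬝ᵥ (W *ᵥ y)) := by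
  have hx := auxB_nonneg hW x
  have hy := auxB_nonneg hW y
  have hcs := auxB_cs hW x y
  have hexp : (x + y) ⬝ᵥ (W *ᵥ (x + y)) =
      x ⬝ᵥ (W *ᵥ x) + 2 * (x ⬝ᵥ (W *ᵥ y)) + y ⬝ᵥ (W *ᵥ y) := by
    rw [Matrix.mulVec_add, add_dotProduct, dotProduct_add, dotProduct_add,
      auxB_symm hW y x]
    ring
  have hle : (x + y) ⬝ᵥ (W *ᵥ (x + y)) ≤
      (Real.sqrt (x ⬝ᵥ (W *ᵥ x)) + Real.sqrt (y ⬝ᵥ (W *ᵥ y))) ^ 2 := by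
    rw [hexp, add_sq, Real.sq_sqrt hx, Real.sq_sqrt hy]
    nlinarith
  calc Real.sqrt ((x + y) ⬝ᵥ (W *ᵥ (x + y))) ≤
        Real.sqrt ((Real.sqrt (x ⬝ᵥ (W *ᵥ x)) + Real.sqrt (y ⬝ᵥ (W *ᵥ y))) ^ 2) :=
        Real.sqrt_le_sqrt hle
    _ = _ := Real.sqrt_sq (by positivity)

/-- key pointwise bound -/
lemma aux_key (hW : W.PosDef) {C : ℝ} (θstar θhat θ v : Fin k → ℝ)
    (h1 : Real.sqrt ((θhat - θstar) ⬝ᵥ (W *ᵥ (θhat - θstar))) ≤ C)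
    (h2 : Real.sqrt ((θ - θhat) ⬝ᵥ (W *ᵥ (θ - θhat))) ≤ C) :
    v ⬝ᵥ θstar - v ⬝ᵥ θ ≤ 2 * C * Real.sqrt (v ⬝ᵥ (W⁻¹ *ᵥ v)) := by
  have hWinv : W * W⁻¹ = 1 := Matrix.mul_nonsing_inv _ (isUnit_iff_ne_zero.mpr hW.det_pos.ne')
  set u := θstar - θ with hu
  set w := W⁻¹ *ᵥ v with hw
  have hWw : W *ᵥ w = v := by
    rw [hw, Matrix.mulVec_mulVec, hWinv, Matrix.one_mulVec]
  -- v ⬝ᵥ u = w ⬝ᵥ (W *ᵥ u)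
  have hvu : v ⬝ᵥ θstar - v ⬝ᵥ θ = w ⬝ᵥ (W *ᵥ u) := by
    rw [auxB_symm hW w u, hWw, ← dotProduct_sub, ← hu, dotProduct_comm]
  -- ‖w‖_W² = v ⬝ᵥ W⁻¹ v
  have hww : w ⬝ᵥ (W *ᵥ w) = v ⬝ᵥ (W⁻¹ *ᵥ v) := by
    rw [hWw, dotProduct_comm, hw]
  have hcs := auxB_cs hW w u
  rw [hww] at hcs
  -- bound on ‖u‖_W
  have hutri : Real.sqrt (u ⬝ᵥ (W *ᵥ u)) ≤ 2 * C := by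
    have hdecomp : u = -(θhat - θstar) + -(θ - θhat) := by rw [hu]; abel
    have hneg : ∀ z : Fin k → ℝ, (-z) ⬝ᵥ (W *ᵥ (-z)) = z ⬝ᵥ (W *ᵥ z) := by
      intro z; rw [Matrix.mulVec_neg, neg_dotProduct, dotProduct_neg, neg_neg]
    calc Real.sqrt (u ⬝ᵥ (W *ᵥ u)) =
          Real.sqrt ((-(θhat - θstar) + -(θ - θhat)) ⬝ᵥ (W *ᵥ (-(θhat - θstar) + -(θ - θhat)))) := by
          rw [← hdecomp]
      _ ≤ Real.sqrt ((-(θhat - θstar)) ⬝ᵥ (W *ᵥ (-(θhat - θstar)))) +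
            Real.sqrt ((-(θ - θhat)) ⬝ᵥ (W *ᵥ (-(θ - θhat)))) := auxB_tri hW _ _
      _ = Real.sqrt ((θhat - θstar) ⬝ᵥ (W *ᵥ (θhat - θstar))) +
            Real.sqrt ((θ - θhat) ⬝ᵥ (W *ᵥ (θ - θhat))) := by rw [hneg, hneg]
      _ ≤ C + C := add_le_add h1 h2
      _ = 2 * C := by ring
  rw [hvu]
  calc w ⬝ᵥ (W *ᵥ u) ≤ Real.sqrt (v ⬝ᵥ (W⁻¹ *ᵥ v)) * Real.sqrt (u ⬝ᵥ (W *ᵥ u)) := hcs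
    _ ≤ Real.sqrt (v ⬝ᵥ (W⁻¹ *ᵥ v)) * (2 * C) :=
        mul_le_mul_of_nonneg_left hutri (Real.sqrt_nonneg _)
    _ = 2 * C * Real.sqrt (v ⬝ᵥ (W⁻¹ *ᵥ v)) := by ring

end Aux

/-- **Sub-optimality bound for the pessimistic policy (Theorem 2, deterministic core).**
Let `g : Π → ℝ^k` assign to each policy its expected feature vector, let `W` be
symmetric positive definite, `C ≥ 0`, and suppose the true parameter satisfies
`‖θ̂ − θ*‖_W ≤ C`.  Define the pessimistic value
`Ĵ(π) = inf {⟨g(π), θ⟩ : ‖θ − θ̂‖_W ≤ C}` and let `π̂` maximize `Ĵ`.  Then for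
every `π*`, `⟨g(π*), θ*⟩ − ⟨g(π̂), θ*⟩ ≤ 2 C ‖g(π*)‖_{W⁻¹}`. -/
theorem pessimism_suboptimality_bound (k : ℕ) (hk : 0 < k)
    (Pol : Type*) [Nonempty Pol] (g : Pol → (Fin k → ℝ))
    (W : Matrix (Fin k) (Fin k) ℝ) (hW : W.PosDef)
    (C : ℝ) (hC : 0 ≤ C) (θstar θhat : Fin k → ℝ)
    (hconf : Real.sqrt ((θhat - θstar) ⬝ᵥ (W *ᵥ (θhat - θstar))) ≤ C)
    (J : Pol → ℝ)
    (hJ : ∀ π : Pol, J π = sInf {y : ℝ | ∃ θ : Fin k → ℝ,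
        Real.sqrt ((θ - θhat) ⬝ᵥ (W *ᵥ (θ - θhat))) ≤ C ∧ y = g π ⬝ᵥ θ})
    (πhat : Pol) (hπhat : ∀ π : Pol, J π ≤ J πhat) :
    ∀ πstar : Pol,
      g πstar ⬝ᵥ θstar - g πhat ⬝ᵥ θstar ≤
        2 * C * Real.sqrt (g πstar ⬝ᵥ (W⁻¹ *ᵥ g πstar)) := by
  intro πstar
  have hθstar_mem : Real.sqrt ((θstar - θhat) ⬝ᵥ (W *ᵥ (θstar - θhat))) ≤ C := by
    have heq : (θstar - θhat) ⬝ᵥ (W *ᵥ (θstar - θhat)) =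
        (θhat - θstar) ⬝ᵥ (W *ᵥ (θhat - θstar)) := by
      have h : θstar - θhat = -(θhat - θstar) := by abel
      rw [h, Matrix.mulVec_neg, neg_dotProduct, dotProduct_neg, neg_neg]
    rw [heq]; exact hconf
  have h1 : J πhat ≤ g πhat ⬝ᵥ θstar := by
    rw [hJ]
    apply csInf_le
    · refine ⟨g πhat ⬝ᵥ θstar - 2 * C * Real.sqrt (g πhat ⬝ᵥ (W⁻¹ *ᵥ g πhat)), ?_⟩
      rintro y ⟨θ, hθ, rfl⟩
      have := aux_key hW θstar θhat θ (g πhat) hconf hθ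
      linarith
    · exact ⟨θstar, hθstar_mem, rfl⟩
  have h2 : g πstar ⬝ᵥ θstar - 2 * C * Real.sqrt (g πstar ⬝ᵥ (W⁻¹ *ᵥ g πstar)) ≤ J πstar := by
    rw [hJ]
    refine le_csInf ⟨g πstar ⬝ᵥ θstar, ⟨θstar, hθstar_mem, rfl⟩⟩ ?_
    rintro y ⟨θ, hθ, rfl⟩
    have := aux_key hW θstar θhat θ (g πstar) hconf hθ
    linarith
  have h3 := hπhat πstar
  linarith
end
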